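/- Let e be a nonzero idempotent (e·e = e) in an admissible Poisson algebra P. Then e lies in the center of the associated Lie algebra: {e, x} = 0 for all x in P, and consequently e·x = x·e = e∙x for all x. -/
import Mathlib


variable {K : Type*} [Field K] {P : Type*} [AddCommGroup P] [Module K P]

/-- The associator of a bilinear multiplication. -/
def assocOf (m : P →ₗ[K] P →ₗ[K] P) (X Y Z : P) : P := m (m X Y) Z - m X (m Y Z)

/-- Admissible Poisson algebra condition:
`3 A(X,Y,Z) = (X·Z)·Y + (Y·Z)·X - (Y·X)·Z - (Z·X)·Y`. -/
def IsAdmissible (m : P →ₗ[K] P →ₗ[K] P) : Prop :=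
  ∀ X Y Z : P, (3 : ℤ) • assocOf m X Y Z =
    m (m X Z) Y + m (m Y Z) X - m (m Y X) Z - m (m Z X) Y

/-- The antisymmetrized bracket `{X,Y} = (X·Y - Y·X)/2`. -/
def brOf (m : P →ₗ[K] P →ₗ[K] P) (X Y : P) : P := (2 : K)⁻¹ • (m X Y - m Y X)

/-- The symmetrized product `X∙Y = (X·Y + Y·X)/2`. -/
def bulOf (m : P →ₗ[K] P →ₗ[K] P) (X Y : P) : P := (2 : K)⁻¹ • (m X Y + m Y X)

lemma smul_cancelK (c : K) (hc : c ≠ 0) {a b : P} (h : c • a = c • b) : a = b := by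
  have h' := congrArg (fun y => c⁻¹ • y) h
  simpa [inv_smul_smul₀ hc] using h'

lemma cancel3 (h3 : (3 : K) ≠ 0) {a b : P} (h : (3 : ℤ) • a = (3 : ℤ) • b) : a = b := by
  apply smul_cancelK (3 : K) h3
  calc (3 : K) • a = (3 : ℤ) • a := by module
    _ = (3 : ℤ) • b := h
    _ = (3 : K) • b := by module

lemma cancel2 (h2 : (2 : K) ≠ 0) {a b : P} (h : (2 : ℤ) • a = (2 : ℤ) • b) : a = b := by
  apply smul_cancelK (2 : K) h2
  calc (2 : K) • a = (2 : ℤ) • a := by module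
    _ = (2 : ℤ) • b := h
    _ = (2 : K) • b := by module

/-- a nonzero idempotent `e` of an admissible Poisson algebra lies
in the center of the associated Lie algebra: `{e,x} = 0`, hence
`e·x = x·e = e∙x` for all `x`. -/
theorem stmt7 (h2 : (2 : K) ≠ 0) (h3 : (3 : K) ≠ 0)
    (m : P →ₗ[K] P →ₗ[K] P) (hm : IsAdmissible m)
    (e : P) (he0 : e ≠ 0) (he : m e e = e) :
    ∀ x : P, brOf m e x = 0 ∧ m e x = m x e ∧ m e x = bulOf m e x := by
  intro x
  set u := m x e - m e x with hu_def
  have H1 := hm x e e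
  have H2 := hm e x e
  have H3 := hm e e x
  have G1 := hm e e u
  have G2 := hm e u e
  have G3 := hm u e e
  simp only [assocOf] at H1 H2 H3 G1 G2 G3
  -- Leibniz-type identity instance (times 3)
  have star : (3 : ℤ) • (m x (m e e) + m x (m e e) - (m (m e e) x + m (m e e) x)) =
      (3 : ℤ) • (m (m x e) e - m (m e x) e + m e (m x e) - m e (m e x) +
        (m e (m x e) - m e (m e x) + m (m x e) e - m (m e x) e)) := by
    linear_combination (norm := module) (-2 : ℤ) • H1 + (2 : ℤ) • H2 + (-2 : ℤ) • H3
  have star' := cancel3 h3 star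
  rw [he] at star'
  -- associativity-type identity instance (times 3)
  have star2 : (3 : ℤ) • (m (m e e) u + m (m e e) u + (m u (m e e) + m u (m e e))) =
      (3 : ℤ) • (m e (m e u) + m e (m u e) + m (m e u) e + m (m u e) e) := by
    linear_combination (norm := module) G1 + G2 - (2 : ℤ) • G3
  have star2' := cancel3 h3 star2
  rw [he] at star2'
  -- `u = u·e + e·u`
  have hu2 : (2 : ℤ) • u = (2 : ℤ) • (m u e + m e u) := by
    rw [hu_def]
    simp only [map_sub, LinearMap.sub_apply]
    linear_combination (norm := module) star'
  have hu := cancel2 h2 hu2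
  have h1 : m e u + m u e = u := by
    linear_combination (norm := module) -hu
  have hadd1 : m e (m e u + m u e) = m e (m e u) + m e (m u e) := map_add _ _ _
  have hadd2 : m (m e u + m u e) e = m (m e u) e + m (m u e) e := by
    rw [map_add, LinearMap.add_apply]
  have h1e : m e (m e u + m u e) = m e u := by rw [h1]
  have h1e' : m (m e u + m u e) e = m u e := by rw [h1]
  have hu0 : u = 0 := by
    linear_combination (norm := module) star2' - hadd1 - hadd2 + h1e + h1e' - h1
  have hab : m e x = m x e := by
    rw [hu_def] at hu0
    exact (sub_eq_zero.mp hu0).symm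
  refine ⟨?_, hab, ?_⟩
  · rw [brOf, hab, sub_self, smul_zero]
  · rw [bulOf, ← hab, ← two_smul K, smul_smul, inv_mul_cancel₀ h2, one_smul]
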